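/- Let t be a positive integer, let ε be a uniformly random coloring ε : {1,…,t} → {−1,+1} (i.e., the 2^t colorings are equally likely), and let b be a function defined on colorings taking values in some countable set. If the base-2 Shannon entropy of the random variable b(ε) satisfies H(b(ε)) ≤ t/5, then there exist two colorings ε₁, ε₂ : {1,…,t} → {−1,+1} that differ in at least t/4 coordinates and satisfy b(ε₁) = b(ε₂). -/

import Mathlib

noncomputable section

/-- The `2^t` colorings `ε : {1,…,t} → {−1,+1}`. -/
def colorings (t : ℕ) : Finset (Fin t → ℤ) :=
  Fintype.piFinset fun _ => ({-1, 1} : Finset ℤ)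

/-- The base-2 Shannon entropy `H(b(ε))` of the random variable `b(ε)`, where `ε` is a
uniformly random coloring in `{−1,+1}^t`: `H = −Σ_λ p_λ log₂ p_λ` with
`p_λ = P(b(ε) = λ)`. -/
def colEntropy {t : ℕ} {Λ : Type*} (b : (Fin t → ℤ) → Λ) : ℝ := by
  classical
  exact -∑ v ∈ (colorings t).image b,
    ((((colorings t).filter fun ε => b ε = v).card : ℝ) / ((colorings t).card : ℝ)) *
      Real.logb 2
        ((((colorings t).filter fun ε => b ε = v).card : ℝ) / ((colorings t).card : ℝ))

open Real Finset


private lemma poly_ineq (x : ℝ) (h0 : 0 ≤ x) (h2 : x^4 ≤ 1/2) :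
    4*x^3 - 6*x^4 + 3*x^8 ≤ 7/40 := by
  nlinarith [mul_nonneg (sub_nonneg.2 h2) (sq_nonneg (x - 11/20)), mul_nonneg (sub_nonneg.2 h2) (sq_nonneg (x - 1)), sq_nonneg (x^2 - 1/4), sq_nonneg (x^2 - 3/10), mul_nonneg h0 (sq_nonneg (x - 11/20)), mul_nonneg (mul_nonneg h0 h0) (sq_nonneg (x - 11/20)), sq_nonneg (x^4 - 1/2), sq_nonneg (x^4 - x^2), sq_nonneg (x^3 - 1/2*x)]

private lemma binEntropy_le_half (γ : ℝ) (h0 : 0 ≤ γ) (h1 : γ ≤ 1/2) :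
    binEntropy γ ≤ 3*γ*(1-γ) + 7/40 := by
  rcases eq_or_lt_of_le h0 with rfl | hpos
  · simp; norm_num
  · set x : ℝ := γ ^ ((4:ℝ)⁻¹) with hx
    have hxpos : 0 < x := rpow_pos_of_pos hpos _
    have hx4 : x ^ (4:ℕ) = γ := by
      rw [hx, ← rpow_natCast (γ ^ ((4:ℝ)⁻¹)) 4, ← rpow_mul h0]
      norm_num
    have hlogx : Real.log γ = 4 * Real.log x := by
      rw [← hx4, Real.log_pow]; push_cast; ring
    -- bound negMulLog γ ≤ 4x^3 - 4x^4
    have hlb : Real.log x⁻¹ ≤ x⁻¹ - 1 := Real.log_le_sub_one_of_pos (by positivity)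
    have h1' : negMulLog γ ≤ 4*x^3 - 4*x^4 := by
      have : negMulLog γ = 4 * x^4 * Real.log x⁻¹ := by
        rw [negMulLog, hlogx, Real.log_inv, hx4]; ring
      rw [this]
      have h4 : (0:ℝ) ≤ 4 * x^4 := by positivity
      calc 4 * x^4 * Real.log x⁻¹ ≤ 4 * x^4 * (x⁻¹ - 1) := by
            exact mul_le_mul_of_nonneg_left hlb h4
        _ = 4*x^3 - 4*x^4 := by field_simp
    -- bound negMulLog (1-γ) ≤ γ
    have hg1 : 0 < 1 - γ := by linarith
    have h2' : negMulLog (1-γ) ≤ γ := by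
      have hlb2 : Real.log (1-γ)⁻¹ ≤ (1-γ)⁻¹ - 1 := Real.log_le_sub_one_of_pos (by positivity)
      have : negMulLog (1-γ) = (1-γ) * Real.log (1-γ)⁻¹ := by
        rw [negMulLog, Real.log_inv]; ring
      rw [this]
      calc (1-γ) * Real.log (1-γ)⁻¹ ≤ (1-γ) * ((1-γ)⁻¹ - 1) := by
            exact mul_le_mul_of_nonneg_left hlb2 hg1.le
        _ = γ := by field_simp; ring
    have hx4le : x^4 ≤ 1/2 := by rw [show (4:ℕ) = 4 from rfl] at hx4; rw [hx4]; exact h1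
    have hpoly := poly_ineq x hxpos.le hx4le
    have hbe : binEntropy γ = negMulLog γ + negMulLog (1-γ) :=
      binEntropy_eq_negMulLog_add_negMulLog_one_sub γ
    have hγx : γ = x^4 := hx4.symm
    rw [hbe]
    calc negMulLog γ + negMulLog (1-γ) ≤ (4*x^3 - 4*x^4) + γ := by linarith
      _ ≤ 3*γ*(1-γ) + 7/40 := by rw [hγx]; nlinarith [hpoly]

lemma binEntropy_le_quad (γ : ℝ) (h0 : 0 ≤ γ) (h1 : γ ≤ 1) :
    binEntropy γ ≤ 3*γ*(1-γ) + 7/40 := by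
  rcases le_or_gt γ (1/2) with h | h
  · exact binEntropy_le_half γ h0 h
  · have := binEntropy_le_half (1-γ) (by linarith) (by linarith)
    rw [binEntropy_one_sub] at this
    calc binEntropy γ ≤ 3*(1-γ)*(1-(1-γ)) + 7/40 := this
      _ = 3*γ*(1-γ) + 7/40 := by ring



private lemma div_mem_Icc01 {a m : ℕ} (h : a ≤ m) : (a:ℝ)/m ∈ Set.Icc (0:ℝ) 1 := by
  rcases Nat.eq_zero_or_pos m with rfl | hm
  · interval_cases a; simp
  · constructor
    · positivity
    · rw [div_le_one (by exact_mod_cast hm)]; exact_mod_cast h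

private lemma binEntropy_combo {p q₀ q₁ : ℝ} (hp0 : 0 ≤ p) (hp1 : p ≤ 1)
    (hq₀ : q₀ ∈ Set.Icc (0:ℝ) 1) (hq₁ : q₁ ∈ Set.Icc (0:ℝ) 1) :
    (1-p) * binEntropy q₀ + p * binEntropy q₁ ≤ binEntropy ((1-p)*q₀ + p*q₁) := by
  have h := (Real.strictConcave_binEntropy.concaveOn).2 hq₀ hq₁
    (by linarith : (0:ℝ) ≤ 1 - p) hp0 (by ring)
  simpa [smul_eq_mul] using h

private lemma combo_nat (a₀ a₁ m₀ m₁ : ℕ) (h₀ : a₀ ≤ m₀) (h₁ : a₁ ≤ m₁)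
    (hm : 0 < m₀ + m₁) :
    ((m₀:ℝ)/((m₀:ℝ)+m₁)) * binEntropy ((a₀:ℝ)/m₀)
      + ((m₁:ℝ)/((m₀:ℝ)+m₁)) * binEntropy ((a₁:ℝ)/m₁)
      ≤ binEntropy (((a₀:ℝ)+a₁)/((m₀:ℝ)+m₁)) := by
  have hmR : (0:ℝ) < (m₀:ℝ)+m₁ := by exact_mod_cast hm
  rcases Nat.eq_zero_or_pos m₀ with rfl | hm₀
  · have ha : a₀ = 0 := Nat.le_zero.1 h₀
    subst ha
    simp only [Nat.cast_zero, zero_add, zero_div, div_zero, mul_zero, zero_mul]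
    simp only [Nat.cast_zero, zero_add] at hmR ⊢
    rw [div_self hmR.ne', one_mul]
  · rcases Nat.eq_zero_or_pos m₁ with rfl | hm₁
    · have ha : a₁ = 0 := Nat.le_zero.1 h₁
      subst ha
      simp only [Nat.cast_zero, add_zero, zero_div, div_zero, mul_zero, zero_mul]
      simp only [Nat.cast_zero, add_zero] at hmR ⊢
      rw [div_self hmR.ne', one_mul]
    · have h0R : (0:ℝ) < m₀ := by exact_mod_cast hm₀
      have h1R : (0:ℝ) < m₁ := by exact_mod_cast hm₁
      have hp0 : (0:ℝ) ≤ (m₁:ℝ)/((m₀:ℝ)+m₁) := by positivity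
      have hp1 : (m₁:ℝ)/((m₀:ℝ)+m₁) ≤ 1 := by
        rw [div_le_one hmR]; linarith
      have h1p : (1:ℝ) - (m₁:ℝ)/((m₀:ℝ)+m₁) = (m₀:ℝ)/((m₀:ℝ)+m₁) := by
        field_simp
        ring
      have hcombo := binEntropy_combo hp0 hp1 (div_mem_Icc01 h₀) (div_mem_Icc01 h₁)
      rw [h1p] at hcombo
      refine hcombo.trans_eq ?_
      congr 1
      field_simp

private lemma log_split (m₀ m₁ : ℕ) :
    Real.log ((m₀:ℝ) + m₁) = Real.binEntropy ((m₁:ℝ)/((m₀:ℝ)+m₁))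
      + ((m₀:ℝ)/((m₀:ℝ)+m₁)) * Real.log m₀ + ((m₁:ℝ)/((m₀:ℝ)+m₁)) * Real.log m₁ := by
  rcases Nat.eq_zero_or_pos m₀ with rfl | h₀
  · rcases Nat.eq_zero_or_pos m₁ with rfl | h₁
    · simp
    · have : (m₁:ℝ) ≠ 0 := by exact_mod_cast h₁.ne'
      simp [this]
  · rcases Nat.eq_zero_or_pos m₁ with rfl | h₁
    · have : (m₀:ℝ) ≠ 0 := by exact_mod_cast h₀.ne'
      simp [this]
    · have ha : (0:ℝ) < m₀ := by exact_mod_cast h₀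
      have hb : (0:ℝ) < m₁ := by exact_mod_cast h₁
      have hm : (0:ℝ) < (m₀:ℝ) + m₁ := by linarith
      rw [Real.binEntropy]
      have e1 : (1:ℝ) - (m₁:ℝ)/((m₀:ℝ)+m₁) = (m₀:ℝ)/((m₀:ℝ)+m₁) := by
        field_simp
        ring
      rw [e1, inv_div, inv_div, Real.log_div hm.ne' hb.ne', Real.log_div hm.ne' ha.ne']
      field_simp
      ring

lemma subadd (n : ℕ) (S : Finset (Fin n → ℤ))
    (hS : ∀ x ∈ S, ∀ j, x j = 1 ∨ x j = -1) :
    Real.log S.card ≤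
      ∑ j : Fin n, Real.binEntropy (((S.filter fun x => x j = 1).card : ℝ) / S.card) := by
  induction n with
  | zero =>
    have hcard : S.card ≤ 1 := Finset.card_le_one.mpr
      (fun a _ b _ => funext fun j => j.elim0)
    simp only [Fin.sum_univ_zero]
    exact Real.log_nonpos (by positivity) (by exact_mod_cast hcard)
  | succ n ih =>
    classical
    rcases Nat.eq_zero_or_pos S.card with hm0 | hmpos
    · have hSe : S = ∅ := Finset.card_eq_zero.1 hm0
      simp [hSe]
    have hinj : ∀ A : Finset (Fin (n+1) → ℤ), A ⊆ S →
        (∀ x ∈ A, ∀ y ∈ A, x 0 = y 0) → Set.InjOn (fun (x : Fin (n+1) → ℤ) (j : Fin n) => x j.succ) A := by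
      intro A hA h0 x hx y hy hxy
      funext j
      refine Fin.cases ?_ (fun i => ?_) j
      · exact h0 x hx y hy
      · exact congrFun hxy i
    have hinj₁ : Set.InjOn (fun (x : Fin (n+1) → ℤ) (j : Fin n) => x j.succ) (S.filter (fun x => x 0 = 1)) := by
      refine hinj _ (Finset.filter_subset _ _) ?_
      intro x hx y hy
      rw [(Finset.mem_filter.1 hx).2, (Finset.mem_filter.1 hy).2]
    have hinj₀ : Set.InjOn (fun (x : Fin (n+1) → ℤ) (j : Fin n) => x j.succ) (S.filter (fun x => ¬ x 0 = 1)) := by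
      refine hinj _ (Finset.filter_subset _ _) ?_
      intro x hx y hy
      have hx' : x 0 = -1 :=
        (hS x (Finset.mem_filter.1 hx).1 0).resolve_left (Finset.mem_filter.1 hx).2
      have hy' : y 0 = -1 :=
        (hS y (Finset.mem_filter.1 hy).1 0).resolve_left (Finset.mem_filter.1 hy).2
      rw [hx', hy']
    -- apply IH to the images
    have hIH : ∀ A : Finset (Fin (n+1) → ℤ), A ⊆ S → Set.InjOn (fun (x : Fin (n+1) → ℤ) (j : Fin n) => x j.succ) A →
        Real.log A.card ≤
          ∑ j : Fin n, Real.binEntropy (((A.filter fun x => x (Fin.succ j) = 1).card : ℝ) / A.card) := by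
      intro A hA hinjA
      have h1 := ih (A.image (fun (x : Fin (n+1) → ℤ) (j : Fin n) => x j.succ)) (by
        intro y hy j
        obtain ⟨x, hx, rfl⟩ := Finset.mem_image.1 hy
        exact hS x (hA hx) j.succ)
      have hcards : (A.image (fun (x : Fin (n+1) → ℤ) (j : Fin n) => x j.succ)).card = A.card := Finset.card_image_of_injOn hinjA
      have hfilt : ∀ j : Fin n,
          ((A.image (fun (x : Fin (n+1) → ℤ) (j : Fin n) => x j.succ)).filter (fun y => y j = 1)).card
            = (A.filter (fun x => x (Fin.succ j) = 1)).card := by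
        intro j
        rw [Finset.filter_image]
        exact Finset.card_image_of_injOn (hinjA.mono (Finset.filter_subset _ _))
      rw [hcards] at h1
      refine h1.trans_eq (Finset.sum_congr rfl (fun j _ => ?_))
      rw [hfilt j]
    have ih₁ := hIH _ (Finset.filter_subset _ _) hinj₁
    have ih₀ := hIH _ (Finset.filter_subset _ _) hinj₀
    -- notation
    set m₁ := (S.filter (fun x => x 0 = 1)).card with hm₁
    clear_value m₁
    set m₀ := (S.filter (fun x => ¬ x 0 = 1)).card with hm₀
    clear_value m₀
    have hsplit : m₀ + m₁ = S.card := by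
      rw [hm₀, hm₁, add_comm]
      exact Finset.card_filter_add_card_filter_not _
    have hsplitR : (m₀:ℝ) + m₁ = (S.card : ℝ) := by exact_mod_cast hsplit
    have hasplit : ∀ j : Fin n,
        ((S.filter (fun x => ¬ x 0 = 1)).filter (fun x => x (Fin.succ j) = 1)).card
          + ((S.filter (fun x => x 0 = 1)).filter (fun x => x (Fin.succ j) = 1)).card
          = (S.filter (fun x => x (Fin.succ j) = 1)).card := by
      intro j
      have h := Finset.card_filter_add_card_filter_not
        (s := S.filter (fun x => x (Fin.succ j) = 1)) (p := fun x => x 0 = 1)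
      rw [Finset.filter_filter, Finset.filter_filter] at h
      rw [Finset.filter_filter, Finset.filter_filter]
      have c1 : S.filter (fun a => ¬ a 0 = 1 ∧ a (Fin.succ j) = 1)
          = S.filter (fun a => a (Fin.succ j) = 1 ∧ ¬ a 0 = 1) := by
        apply Finset.filter_congr
        intro x _
        constructor <;> (intro hh; exact ⟨hh.2, hh.1⟩)
      have c2 : S.filter (fun a => a 0 = 1 ∧ a (Fin.succ j) = 1)
          = S.filter (fun a => a (Fin.succ j) = 1 ∧ a 0 = 1) := by
        apply Finset.filter_congr
        intro x _
        constructor <;> (intro hh; exact ⟨hh.2, hh.1⟩)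
      rw [c1, c2]
      linarith [h]
    have hmR : (0:ℝ) < S.card := by exact_mod_cast hmpos
    -- key identity
    have key0 : Real.log (S.card) = Real.binEntropy ((m₁:ℝ)/S.card)
        + ((m₀:ℝ)/S.card) * Real.log m₀ + ((m₁:ℝ)/S.card) * Real.log m₁ := by
      have h := log_split m₀ m₁
      rw [hsplitR] at h
      exact h
    have hw₀ : (0:ℝ) ≤ (m₀:ℝ)/S.card := by positivity
    have hw₁ : (0:ℝ) ≤ (m₁:ℝ)/S.card := by positivity
    have step1 : Real.log (S.card) ≤ Real.binEntropy ((m₁:ℝ)/S.card)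
        + ∑ j : Fin n,
          (((m₀:ℝ)/S.card) * Real.binEntropy
              ((((S.filter (fun x => ¬ x 0 = 1)).filter (fun x => x (Fin.succ j) = 1)).card : ℝ) / m₀)
            + ((m₁:ℝ)/S.card) * Real.binEntropy
              ((((S.filter (fun x => x 0 = 1)).filter (fun x => x (Fin.succ j) = 1)).card : ℝ) / m₁)) := by
      rw [key0]
      have b₀ := mul_le_mul_of_nonneg_left ih₀ hw₀
      have b₁ := mul_le_mul_of_nonneg_left ih₁ hw₁
      rw [Finset.sum_add_distrib, ← Finset.mul_sum, ← Finset.mul_sum]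
      linarith
    have step2 : ∀ j : Fin n,
        ((m₀:ℝ)/S.card) * Real.binEntropy
            ((((S.filter (fun x => ¬ x 0 = 1)).filter (fun x => x (Fin.succ j) = 1)).card : ℝ) / m₀)
          + ((m₁:ℝ)/S.card) * Real.binEntropy
            ((((S.filter (fun x => x 0 = 1)).filter (fun x => x (Fin.succ j) = 1)).card : ℝ) / m₁)
          ≤ Real.binEntropy (((S.filter (fun x => x (Fin.succ j) = 1)).card : ℝ) / S.card) := by
      intro j
      have h := combo_nat
        ((S.filter (fun x => ¬ x 0 = 1)).filter (fun x => x (Fin.succ j) = 1)).card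
        ((S.filter (fun x => x 0 = 1)).filter (fun x => x (Fin.succ j) = 1)).card
        m₀ m₁ (by rw [hm₀]; exact Finset.card_filter_le _ _) (by rw [hm₁]; exact Finset.card_filter_le _ _) (by rw [hsplit]; exact hmpos)
      rw [hsplitR] at h
      have hnum : ((((S.filter (fun x => ¬ x 0 = 1)).filter (fun x => x (Fin.succ j) = 1)).card : ℝ)
          + (((S.filter (fun x => x 0 = 1)).filter (fun x => x (Fin.succ j) = 1)).card : ℝ))
          = ((S.filter (fun x => x (Fin.succ j) = 1)).card : ℝ) := by
        exact_mod_cast hasplit j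
      rw [hnum] at h
      exact h
    have step3 : Real.log (S.card) ≤ Real.binEntropy ((m₁:ℝ)/S.card)
        + ∑ j : Fin n, Real.binEntropy (((S.filter (fun x => x (Fin.succ j) = 1)).card : ℝ) / S.card) := by
      refine step1.trans ?_
      gcongr with j hj
      exact step2 j
    rw [Fin.sum_univ_succ, ← hm₁]
    exact step3

-- double counting of pairwise Hamming distances
lemma pairsum (t : ℕ) (S : Finset (Fin t → ℤ))
    (hval : ∀ x ∈ S, ∀ j, x j = 1 ∨ x j = -1) :
    ∑ x ∈ S, ∑ y ∈ S, (Finset.univ.filter fun j => x j ≠ y j).card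
      = ∑ j : Fin t, ((S.filter fun x => x j = 1).card * (S.filter fun x => ¬ x j = 1).card
          + (S.filter fun x => ¬ x j = 1).card * (S.filter fun x => x j = 1).card) := by
  classical
  have expand : ∀ x y : Fin t → ℤ, (Finset.univ.filter fun j => x j ≠ y j).card
      = ∑ j : Fin t, (if x j ≠ y j then 1 else 0) := by
    intro x y
    rw [Finset.card_filter]
  calc ∑ x ∈ S, ∑ y ∈ S, (Finset.univ.filter fun j => x j ≠ y j).card
      = ∑ x ∈ S, ∑ y ∈ S, ∑ j : Fin t, (if x j ≠ y j then 1 else 0) := by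
        refine Finset.sum_congr rfl fun x _ => Finset.sum_congr rfl fun y _ => expand x y
    _ = ∑ x ∈ S, ∑ j : Fin t, ∑ y ∈ S, (if x j ≠ y j then 1 else 0) :=
        Finset.sum_congr rfl fun x _ => Finset.sum_comm
    _ = ∑ j : Fin t, ∑ x ∈ S, ∑ y ∈ S, (if x j ≠ y j then 1 else 0) := Finset.sum_comm
    _ = ∑ j : Fin t, ((S.filter fun x => x j = 1).card * (S.filter fun x => ¬ x j = 1).card
          + (S.filter fun x => ¬ x j = 1).card * (S.filter fun x => x j = 1).card) := by
        refine Finset.sum_congr rfl fun j _ => ?_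
        have inner : ∀ x ∈ S, ∑ y ∈ S, (if x j ≠ y j then 1 else 0)
            = (S.filter fun y => ¬ y j = x j).card := by
          intro x _
          rw [Finset.card_filter]
          refine Finset.sum_congr rfl fun y _ => ?_
          congr 1
          simp [ne_comm, eq_comm]
        rw [Finset.sum_congr rfl inner]
        rw [← Finset.sum_filter_add_sum_filter_not S (fun x => x j = 1)]
        congr 1
        · rw [Finset.sum_congr rfl (fun x hx => ?_), Finset.sum_const, smul_eq_mul]
          have hx1 : x j = 1 := (Finset.mem_filter.1 hx).2
          rw [hx1]
        · rw [Finset.sum_congr rfl (fun x hx => ?_), Finset.sum_const, smul_eq_mul]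
          have hx1 : x j = -1 :=
            (hval x (Finset.mem_filter.1 hx).1 j).resolve_left (Finset.mem_filter.1 hx).2
          rw [hx1]
          congr 1
          apply Finset.filter_congr
          intro y hy
          rcases hval y hy j with h1 | h1 <;> simp [h1]

set_option maxHeartbeats 1000000 in
/-- **The partial coloring lemma via entropy (Lemma 11 in Matousek '96).**
Let `ε : {1,…,t} → {−1,+1}` be a uniformly random coloring and let `b` be a function
of `ε` with values in a countable set. If `H(b(ε)) ≤ t/5`, then there are two
colorings `ε₁, ε₂` differing in at least `t/4` coordinates with `b(ε₁) = b(ε₂)`. -/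
theorem entropy_partial_coloring (t : ℕ) (ht : 0 < t) {Λ : Type*} [Countable Λ]
    (b : (Fin t → ℤ) → Λ) (hH : colEntropy b ≤ (t : ℝ) / 5) :
    ∃ ε₁ ∈ colorings t, ∃ ε₂ ∈ colorings t,
      b ε₁ = b ε₂ ∧
      (t : ℝ) / 4 ≤ (({j : Fin t | ε₁ j ≠ ε₂ j}).ncard : ℝ) := by
  classical
  by_contra hcon
  push_neg at hcon
  have htR : (0:ℝ) < t := by exact_mod_cast ht
  have hCcard : (colorings t).card = 2^t := by
    simp [colorings]
  have hCne : (colorings t).Nonempty := ⟨fun _ => 1, by simp [colorings, Fintype.mem_piFinset]⟩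
  have hVne : ((colorings t).image b).Nonempty := hCne.image b
  obtain ⟨v, hvV, hvmax⟩ := Finset.exists_max_image ((colorings t).image b)
    (fun w => ((colorings t).filter fun ε => b ε = w).card) hVne
  set F := (colorings t).filter fun ε => b ε = v with hF
  set m := F.card with hm
  have hNpos : (0:ℝ) < (colorings t).card := by
    rw [hCcard]; positivity
  have hfibers : ∑ w ∈ (colorings t).image b, ((colorings t).filter fun ε => b ε = w).card
      = (colorings t).card :=
    (Finset.card_eq_sum_card_fiberwise (fun x hx => Finset.mem_image_of_mem b hx)).symm
  have hpos : ∀ w ∈ (colorings t).image b, 0 < ((colorings t).filter fun ε => b ε = w).card := by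
    intro w hw
    obtain ⟨x, hx, rfl⟩ := Finset.mem_image.1 hw
    exact Finset.card_pos.2 ⟨x, Finset.mem_filter.2 ⟨hx, rfl⟩⟩
  have hmpos : 0 < m := hpos v hvV
  have hmR : (0:ℝ) < m := by exact_mod_cast hmpos
  -- entropy lower bound: H ≥ -logb 2 (m / N)
  have hsum1 : ∑ w ∈ (colorings t).image b,
      (((((colorings t).filter fun ε => b ε = w).card : ℝ)) / ((colorings t).card : ℝ)) = 1 := by
    rw [← Finset.sum_div]
    rw [div_eq_one_iff_eq hNpos.ne']
    exact_mod_cast congrArg (Nat.cast (R := ℝ)) hfibers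
  have hkey : -Real.logb 2 ((m:ℝ)/(colorings t).card) ≤ colEntropy b := by
    unfold colEntropy
    rw [neg_le_neg_iff]
    calc ∑ w ∈ (colorings t).image b,
        (((((colorings t).filter fun ε => b ε = w).card : ℝ)) / ((colorings t).card : ℝ)) *
          Real.logb 2 (((((colorings t).filter fun ε => b ε = w).card : ℝ)) / ((colorings t).card : ℝ))
        ≤ ∑ w ∈ (colorings t).image b,
        (((((colorings t).filter fun ε => b ε = w).card : ℝ)) / ((colorings t).card : ℝ)) *
          Real.logb 2 ((m:ℝ)/(colorings t).card) := by
          refine Finset.sum_le_sum fun w hw => ?_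
          refine mul_le_mul_of_nonneg_left ?_ (by positivity)
          refine Real.logb_le_logb_of_le (by norm_num) ?_ ?_
          · have := hpos w hw
            positivity
          · gcongr
            exact_mod_cast hvmax w hw
      _ = Real.logb 2 ((m:ℝ)/(colorings t).card) := by
          rw [← Finset.sum_mul, hsum1, one_mul]
  have hlogb : -((t:ℝ)/5) ≤ Real.logb 2 ((m:ℝ)/(colorings t).card) := by
    have := hkey.trans hH
    linarith
  have hpM : (2:ℝ) ^ (-((t:ℝ)/5)) ≤ (m:ℝ)/(colorings t).card := by
    have h2 := (Real.rpow_le_rpow_left_iff (by norm_num : (1:ℝ) < 2)).mpr hlogb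
    rwa [Real.rpow_logb (by norm_num) (by norm_num) (by positivity)] at h2
  have hmlb : (2:ℝ) ^ ((4:ℝ)/5*t) ≤ (m:ℝ) := by
    have h3 : (2:ℝ)^(-((t:ℝ)/5)) * (colorings t).card ≤ m := (le_div_iff₀ hNpos).1 hpM
    have h4 : ((colorings t).card : ℝ) = (2:ℝ) ^ ((t:ℝ)) := by
      rw [hCcard]; push_cast; rw [← Real.rpow_natCast 2 t]
    rw [h4, ← Real.rpow_add (by norm_num)] at h3
    have he : -((t:ℝ)/5) + t = 4/5*t := by ring
    rwa [he] at h3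
  have hlow : (4:ℝ)/5*t*Real.log 2 ≤ Real.log m := by
    have h5 : Real.log ((2:ℝ)^((4:ℝ)/5*t)) ≤ Real.log m := by
      apply Real.log_le_log (by positivity) hmlb
    rwa [Real.log_rpow (by norm_num)] at h5
  have hval : ∀ x ∈ F, ∀ j, x j = 1 ∨ x j = -1 := by
    intro x hx j
    have hx' := (Finset.mem_filter.1 hx).1
    have hmem := Fintype.mem_piFinset.1 hx' j
    simp only [Finset.mem_insert, Finset.mem_singleton] at hmem
    tauto
  have hdist : ∀ x ∈ F, ∀ y ∈ F, ((Finset.univ.filter fun j => x j ≠ y j).card : ℝ) < (t:ℝ)/4 := by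
    intro x hx y hy
    have hbx : b x = v := (Finset.mem_filter.1 hx).2
    have hby : b y = v := (Finset.mem_filter.1 hy).2
    have h := hcon x (Finset.mem_filter.1 hx).1 y (Finset.mem_filter.1 hy).1 (hbx.trans hby.symm)
    have he : {j : Fin t | x j ≠ y j}.ncard = (Finset.univ.filter fun j => x j ≠ y j).card := by
      rw [Set.ncard_eq_toFinset_card', Set.toFinset_setOf]
    rwa [he] at h
  have hsumR : (∑ j : Fin t, (((F.filter fun x => x j = 1).card : ℝ) * ((F.filter fun x => ¬ x j = 1).card : ℝ)))
      ≤ (t:ℝ)/8 * (m:ℝ)^2 := by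
    have hps := pairsum t F hval
    have hub : ((∑ x ∈ F, ∑ y ∈ F, (Finset.univ.filter fun j => x j ≠ y j).card : ℕ) : ℝ)
        ≤ (t:ℝ)/4 * (m:ℝ)^2 := by
      push_cast
      calc ∑ x ∈ F, ∑ y ∈ F, ((Finset.univ.filter fun j => x j ≠ y j).card : ℝ)
          ≤ ∑ x ∈ F, ∑ _y ∈ F, (t:ℝ)/4 :=
            Finset.sum_le_sum fun x hx => Finset.sum_le_sum fun y hy => (hdist x hx y hy).le
        _ = (t:ℝ)/4 * (m:ℝ)^2 := by
            simp only [Finset.sum_const, smul_eq_mul, ← hm]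
            ring
    rw [hps] at hub
    push_cast at hub
    have h2 : ∑ j : Fin t, (((F.filter fun x => x j = 1).card : ℝ) * ((F.filter fun x => ¬ x j = 1).card : ℝ)
          + ((F.filter fun x => ¬ x j = 1).card : ℝ) * ((F.filter fun x => x j = 1).card : ℝ))
        = 2 * ∑ j : Fin t, (((F.filter fun x => x j = 1).card : ℝ) * ((F.filter fun x => ¬ x j = 1).card : ℝ)) := by
      rw [Finset.sum_add_distrib, two_mul]
      congr 1
      exact Finset.sum_congr rfl fun j _ => mul_comm _ _
    rw [h2] at hub
    linarith
  have hup : Real.log (m:ℝ) ≤ (11:ℝ)/20 * t := by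
    have h6 := subadd t F hval
    rw [← hm] at h6
    have h7 : ∀ j : Fin t, Real.binEntropy (((F.filter fun x => x j = 1).card : ℝ)/m)
        ≤ 3*(((F.filter fun x => x j = 1).card : ℝ)/m)*(((F.filter fun x => ¬ x j = 1).card : ℝ)/m) + 7/40 := by
      intro j
      have hacj : (F.filter fun x => x j = 1).card + (F.filter fun x => ¬ x j = 1).card = m :=
        Finset.card_filter_add_card_filter_not _
      have hacjR : ((F.filter fun x => x j = 1).card : ℝ) + ((F.filter fun x => ¬ x j = 1).card : ℝ) = (m:ℝ) := by
        exact_mod_cast hacj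
      have h1q : 1 - ((F.filter fun x => x j = 1).card : ℝ)/m = ((F.filter fun x => ¬ x j = 1).card : ℝ)/m := by
        field_simp
        linarith
      have hq0 : (0:ℝ) ≤ ((F.filter fun x => x j = 1).card : ℝ)/m := by positivity
      have hq1 : ((F.filter fun x => x j = 1).card : ℝ)/m ≤ 1 := by
        rw [div_le_one hmR]
        exact_mod_cast Finset.card_filter_le _ _
      have h8 := binEntropy_le_quad _ hq0 hq1
      rwa [h1q] at h8
    have h9 : Real.log (m:ℝ) ≤ ∑ j : Fin t,
        (3*(((F.filter fun x => x j = 1).card : ℝ)/m)*(((F.filter fun x => ¬ x j = 1).card : ℝ)/m) + 7/40) :=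
      h6.trans (Finset.sum_le_sum fun j _ => h7 j)
    have h10 : ∑ j : Fin t,
        (3*(((F.filter fun x => x j = 1).card : ℝ)/m)*(((F.filter fun x => ¬ x j = 1).card : ℝ)/m) + 7/40)
        = 3/(m:ℝ)^2 * (∑ j : Fin t, (((F.filter fun x => x j = 1).card : ℝ) * ((F.filter fun x => ¬ x j = 1).card : ℝ)))
          + 7/40*(t:ℝ) := by
      rw [Finset.sum_add_distrib, Finset.sum_const, Finset.card_univ, Fintype.card_fin]
      rw [Finset.mul_sum]
      congr 1
      · refine Finset.sum_congr rfl fun j _ => ?_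
        field_simp
      · rw [nsmul_eq_mul]
        ring
    rw [h10] at h9
    have h11 : 3/(m:ℝ)^2 * (∑ j : Fin t, (((F.filter fun x => x j = 1).card : ℝ) * ((F.filter fun x => ¬ x j = 1).card : ℝ)))
        ≤ 3/(m:ℝ)^2 * ((t:ℝ)/8 * (m:ℝ)^2) := by
      refine mul_le_mul_of_nonneg_left hsumR (by positivity)
    have h12 : 3/(m:ℝ)^2 * ((t:ℝ)/8 * (m:ℝ)^2) = 3*(t:ℝ)/8 := by
      field_simp
    rw [h12] at h11
    linarith
  have hfin := hlow.trans hup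
  have hprod := mul_lt_mul_of_pos_left Real.log_two_gt_d9 htR
  norm_num at hprod
  linarith

end
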